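/- arXiv:1411.6100 — 2 statements merged into one kernel-verified Lean document; each statement's English description precedes it below -/
import Mathlib

section
/- Let γ be a simple regular closed curve in ℝ², positively oriented, parametrized by arc length, of class C¹ and piecewise C², whose signed curvature changes sign only finitely many times, and suppose γ belongs to the class K_π: every maximal convex arc of γ has total curvature strictly greater than π, and every maximal concave arc of γ has total curvature strictly between −π and 0. Then for every subarc of γ (the restriction of γ to any interval [a, b] with b − a at most the length of γ), the total curvature ∫_a^b k(s) ds is strictly greater than −π. -/
open MeasureTheory Set Real Filter
open scoped RealInnerProductSpace Topology

noncomputable section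

/-- Points of the Euclidean plane. -/
abbrev Pt : Type := EuclideanSpace ℝ (Fin 2)

/-- Rotation by `π/2`; applied to the unit tangent `t` it produces the unit normal `n`
such that the pair `(t, n)` is positively oriented. -/
def rot90 (v : Pt) : Pt := WithLp.toLp 2 ![-(v 1), v 0]

/-- The union of the bounded connected components of the complement of `S`.
For (the image of) a Jordan curve this is the bounded open region `Ω_γ` enclosed
by the curve. -/
def boundedComplement (S : Set Pt) : Set Pt :=
  {x | x ∉ S ∧ Bornology.IsBounded (connectedComponentIn Sᶜ x)}

/-- A simple regular closed curve of Sobolev class `W^{2,2}`, parametrized by arc length,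
encoded as an `L`-periodic map `ℝ → ℝ²`.  The field `tang` is the derivative `γ'`
(continuous, by the Sobolev embedding `W^{2,2} ↪ C¹`), `k` is the signed curvature,
defined through `γ'' = k • n` with `n = rot90 ∘ γ'`, and the field `sobolev` states that
`γ'` is the (absolutely continuous) primitive of `γ'' = k • n`, with `∫ k² < ∞`. -/
structure ClosedCurveW22 where
  /-- the length of the curve -/
  L : ℝ
  L_pos : 0 < L
  /-- the curve, as an `L`-periodic map -/
  γ : ℝ → Pt
  /-- the tangent vector `γ'` -/
  tang : ℝ → Pt
  /-- the signed curvature -/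
  k : ℝ → ℝ
  per_γ : Function.Periodic γ L
  per_tang : Function.Periodic tang L
  per_k : Function.Periodic k L
  deriv_γ : ∀ s, HasDerivAt γ (tang s) s
  cont_tang : Continuous tang
  unit_speed : ∀ᵐ s : ℝ, ‖tang s‖ = 1
  /-- the curve is simple -/
  simple : InjOn γ (Ico 0 L)
  k_meas : Measurable k
  /-- `γ' ∈ W^{1,2}`, with weak derivative `γ'' = k • (rot90 ∘ γ')` -/
  sobolev : ∀ a b : ℝ, tang b - tang a = ∫ s in a..b, k s • rot90 (tang s)
  k_sq_int : IntervalIntegrable (fun s => k s ^ 2) volume 0 L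

namespace ClosedCurveW22

/-- The image (trace) of the curve. -/
def image (c : ClosedCurveW22) : Set Pt := c.γ '' Icc 0 c.L

/-- `Ω_γ`, the bounded open region enclosed by the curve. -/
def omega (c : ClosedCurveW22) : Set Pt := boundedComplement c.image

/-- `A(γ)`, the area enclosed by the curve. -/
def area (c : ClosedCurveW22) : ℝ := (volume c.omega).toReal

/-- `E(γ) = (1/2) ∫ k²`, the elastic energy of the curve. -/
def energy (c : ClosedCurveW22) : ℝ := (1 / 2) * ∫ s in (0:ℝ)..c.L, c.k s ^ 2

/-- The image of the curve is a circle. -/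
def IsCircle (c : ClosedCurveW22) : Prop :=
  ∃ (z : Pt) (r : ℝ), 0 < r ∧ c.image = Metric.sphere z r

end ClosedCurveW22

/-- A simple regular closed curve of class `C¹` and piecewise `C²`, parametrized by arc
length, encoded as an `L`-periodic map `ℝ → ℝ²`.  Away from the (periodically repeated)
finite exceptional set `F` the tangent `γ'` is differentiable with `γ'' = k • n`,
`n = rot90 ∘ γ'`, and the signed curvature `k` is continuous there and bounded. -/
structure PC2ClosedCurve where
  /-- the length of the curve -/
  L : ℝ
  L_pos : 0 < L
  /-- the curve, as an `L`-periodic map -/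
  γ : ℝ → Pt
  /-- the tangent vector `γ'` -/
  tang : ℝ → Pt
  /-- the signed curvature -/
  k : ℝ → ℝ
  per_γ : Function.Periodic γ L
  per_tang : Function.Periodic tang L
  per_k : Function.Periodic k L
  deriv_γ : ∀ s, HasDerivAt γ (tang s) s
  cont_tang : Continuous tang
  unit_speed : ∀ s, ‖tang s‖ = 1
  /-- the curve is simple -/
  simple : InjOn γ (Ico 0 L)
  /-- the finite exceptional set (within one period) -/
  F : Finset ℝ
  deriv_tang : ∀ s : ℝ, (∀ t ∈ F, ∀ m : ℤ, s ≠ t + m * L) →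
    HasDerivAt tang (k s • rot90 (tang s)) s
  cont_k : ∀ s : ℝ, (∀ t ∈ F, ∀ m : ℤ, s ≠ t + m * L) → ContinuousAt k s
  k_bdd : ∃ M : ℝ, ∀ s, |k s| ≤ M
  k_meas : Measurable k

namespace PC2ClosedCurve

/-- The image (trace) of the curve. -/
def image (c : PC2ClosedCurve) : Set Pt := c.γ '' Icc 0 c.L

/-- `Ω_γ`, the bounded open region enclosed by the curve. -/
def omega (c : PC2ClosedCurve) : Set Pt := boundedComplement c.image

/-- `A(γ)`, the area enclosed by the curve. -/
def area (c : PC2ClosedCurve) : ℝ := (volume c.omega).toReal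

/-- `E(γ) = (1/2) ∫ k²`, the elastic energy of the curve. -/
def energy (c : PC2ClosedCurve) : ℝ := (1 / 2) * ∫ s in (0:ℝ)..c.L, c.k s ^ 2

/-- The image of the curve is a circle. -/
def IsCircle (c : PC2ClosedCurve) : Prop :=
  ∃ (z : Pt) (r : ℝ), 0 < r ∧ c.image = Metric.sphere z r

/-- Positive (counterclockwise) orientation: the Gauss–Green signed area of the curve
equals the enclosed area, i.e. the inner normal `rot90 ∘ γ'` points into `Ω_γ`. -/
def PositivelyOriented (c : PC2ClosedCurve) : Prop :=
  (1 / 2) * (∫ s in (0:ℝ)..c.L, (c.γ s 0 * c.tang s 1 - c.γ s 1 * c.tang s 0)) = c.area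

/-- The signed curvature changes sign only finitely many times: one period `[0, L]`
splits into finitely many intervals on each of which `k ≥ 0` or `k ≤ 0`. -/
def FiniteSignChanges (c : PC2ClosedCurve) : Prop :=
  ∃ (n : ℕ) (t : ℕ → ℝ), t 0 = 0 ∧ t n = c.L ∧ (∀ i, i < n → t i ≤ t (i + 1)) ∧
    ∀ i, i < n →
      (∀ s ∈ Icc (t i) (t (i + 1)), 0 ≤ c.k s) ∨ (∀ s ∈ Icc (t i) (t (i + 1)), c.k s ≤ 0)

/-- The total curvature `∫ k` of the arc `γ|_[a,b]`. -/
def totalCurv (c : PC2ClosedCurve) (a b : ℝ) : ℝ := ∫ s in a..b, c.k s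

/-- The arc `γ|_[a,b]` is convex: `k ≥ 0` on it and `k` is not identically zero there. -/
def IsConvexArc (c : PC2ClosedCurve) (a b : ℝ) : Prop :=
  a < b ∧ b - a ≤ c.L ∧ (∀ s ∈ Icc a b, 0 ≤ c.k s) ∧ ¬(∀ s ∈ Icc a b, c.k s = 0)

/-- The arc `γ|_[a,b]` is concave: `k ≤ 0` on it and `k` is not identically zero there. -/
def IsConcaveArc (c : PC2ClosedCurve) (a b : ℝ) : Prop :=
  a < b ∧ b - a ≤ c.L ∧ (∀ s ∈ Icc a b, c.k s ≤ 0) ∧ ¬(∀ s ∈ Icc a b, c.k s = 0)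

/-- A maximal convex arc: a convex arc such that no convex arc containing it has total
curvature of strictly larger absolute value. -/
def IsMaxConvexArc (c : PC2ClosedCurve) (a b : ℝ) : Prop :=
  c.IsConvexArc a b ∧ ∀ a' b' : ℝ, c.IsConvexArc a' b' → a' ≤ a → b ≤ b' →
    |c.totalCurv a' b'| ≤ |c.totalCurv a b|

/-- A maximal concave arc: a concave arc such that no concave arc containing it has total
curvature of strictly larger absolute value. -/
def IsMaxConcaveArc (c : PC2ClosedCurve) (a b : ℝ) : Prop :=
  c.IsConcaveArc a b ∧ ∀ a' b' : ℝ, c.IsConcaveArc a' b' → a' ≤ a → b ≤ b' →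
    |c.totalCurv a' b'| ≤ |c.totalCurv a b|

/-- The class `K_π`: every maximal convex arc has total curvature `> π` and every maximal
concave arc has total curvature in `(-π, 0)`. -/
def KPi (c : PC2ClosedCurve) : Prop :=
  (∀ a b : ℝ, c.IsMaxConvexArc a b → π < c.totalCurv a b) ∧
  (∀ a b : ℝ, c.IsMaxConcaveArc a b →
    -π < c.totalCurv a b ∧ c.totalCurv a b < 0)

/-- The arc of `γ` from `γ a` to `γ b` holds the open convex set `K`: `K ⊆ Ω_γ` is a
bounded open convex set whose boundary is the union of the chord from `γ a` to `γ b`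
and the arc, and the tangents at the two endpoints are parallel (as lines). -/
def Holds (c : PC2ClosedCurve) (a b : ℝ) (K : Set Pt) : Prop :=
  a < b ∧ b - a ≤ c.L ∧ IsOpen K ∧ Convex ℝ K ∧ Bornology.IsBounded K ∧ K ⊆ c.omega ∧
  frontier K = segment ℝ (c.γ a) (c.γ b) ∪ c.γ '' Icc a b ∧
  ∃ t : ℝ, c.tang b = t • c.tang a

end PC2ClosedCurve

/-- An open arc of class `C¹` and piecewise `C²`, parametrized by arc length on `[0, l]`,
with tangent `tang = α'` and curvature `k` (so that `α'' = k • rot90 ∘ α'`, hence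
`‖α''‖ = |k|`), the curvature being continuous away from a finite set and bounded. -/
structure PC2Arc where
  /-- the length of the arc -/
  l : ℝ
  l_pos : 0 < l
  /-- the arc -/
  γ : ℝ → Pt
  /-- the tangent vector `α'` -/
  tang : ℝ → Pt
  /-- the signed curvature -/
  k : ℝ → ℝ
  deriv_γ : ∀ s ∈ Icc (0:ℝ) l, HasDerivWithinAt γ (tang s) (Icc 0 l) s
  cont_tang : ContinuousOn tang (Icc 0 l)
  unit_speed : ∀ s ∈ Icc (0:ℝ) l, ‖tang s‖ = 1
  /-- the finite exceptional set -/
  F : Finset ℝ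
  deriv_tang : ∀ s ∈ Icc (0:ℝ) l, s ∉ F →
    HasDerivWithinAt tang (k s • rot90 (tang s)) (Icc 0 l) s
  cont_k : ContinuousOn k (Icc 0 l \ F)
  k_bdd : ∃ M : ℝ, ∀ s ∈ Icc (0:ℝ) l, |k s| ≤ M
  k_meas : Measurable k

namespace PC2Arc

/-- `E(α) = (1/2) ∫ ‖α''‖² = (1/2) ∫ k²`, the elastic energy of the arc. -/
def energy (α : PC2Arc) : ℝ := (1 / 2) * ∫ s in (0:ℝ)..α.l, α.k s ^ 2

/-- The arc `α` holds the bounded open convex set `Ω`: the boundary of `Ω` is the union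
of the image of `α` and the closed segment joining its endpoints, and the tangent vectors
at the endpoints are parallel (as lines). -/
def Holds (α : PC2Arc) (Ω : Set Pt) : Prop :=
  IsOpen Ω ∧ Convex ℝ Ω ∧ Bornology.IsBounded Ω ∧
  frontier Ω = α.γ '' Icc 0 α.l ∪ segment ℝ (α.γ 0) (α.γ α.l) ∧
  ∃ t : ℝ, α.tang α.l = t • α.tang 0

end PC2Arc

section Statement10Proof

open intervalIntegral

/-- periodicity of the curvature under integer shifts -/
lemma kShiftAux (c : PC2ClosedCurve) (s : ℝ) (m : ℤ) : c.k (s - m * c.L) = c.k s := by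
  have h := (c.per_k.int_mul m) (s - m * c.L)
  rw [sub_add_cancel] at h
  exact h.symm

lemma kIntAux (c : PC2ClosedCurve) (x y : ℝ) : IntervalIntegrable c.k volume x y := by
  obtain ⟨M, hM⟩ := c.k_bdd
  rw [intervalIntegrable_iff]
  refine MeasureTheory.Integrable.mono' (g := fun _ => M)
    ((MeasureTheory.integrableOn_const_iff).mpr (Or.inr ?_))
    (c.k_meas.aestronglyMeasurable.restrict) ?_
  · rw [Set.uIoc]; exact measure_Ioc_lt_top
  · filter_upwards with s
    rw [Real.norm_eq_abs]; exact hM s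

lemma intNonnegAux (c : PC2ClosedCurve) {a b : ℝ} (hab : a ≤ b)
    (h : ∀ s ∈ Icc a b, 0 ≤ c.k s) : 0 ≤ ∫ s in a..b, c.k s :=
  intervalIntegral.integral_nonneg hab h

lemma intNonposAux (c : PC2ClosedCurve) {a b : ℝ} (hab : a ≤ b)
    (h : ∀ s ∈ Icc a b, c.k s ≤ 0) : (∫ s in a..b, c.k s) ≤ 0 := by
  have h2 := intervalIntegral.integral_nonneg (f := fun s => -c.k s) (μ := volume) hab
    (fun u hu => neg_nonneg.2 (h u hu))
  rw [intervalIntegral.integral_neg] at h2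
  linarith

lemma intZeroAux (c : PC2ClosedCurve) {a b : ℝ} (hab : a ≤ b)
    (h : ∀ s ∈ Icc a b, c.k s = 0) : (∫ s in a..b, c.k s) = 0 := by
  have he : EqOn c.k (fun _ => (0:ℝ)) (Set.uIcc a b) := by
    rw [Set.uIcc_of_le hab]; exact h
  rw [intervalIntegral.integral_congr he]
  simp

lemma splitIntAux (c : PC2ClosedCurve) (a b d : ℝ) :
    (∫ s in a..d, c.k s) = (∫ s in a..b, c.k s) + ∫ s in b..d, c.k s :=
  (intervalIntegral.integral_add_adjacent_intervals (kIntAux c a b) (kIntAux c b d)).symm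

lemma chainMonoAux {t : ℕ → ℝ} {n : ℕ} (h : ∀ i, i < n → t i ≤ t (i+1)) :
    ∀ i j, i ≤ j → j ≤ n → t i ≤ t j := by
  intro i j hij hjn
  induction j with
  | zero =>
    obtain rfl := Nat.le_zero.mp hij
    exact le_rfl
  | succ j ih =>
    rcases Nat.lt_or_ge i (j+1) with h'|h'
    · exact (ih (Nat.lt_succ_iff.mp h') (by omega)).trans (h j (by omega))
    · have : i = j + 1 := le_antisymm hij h'
      rw [this]

lemma coverRightAux (c : PC2ClosedCurve) (hsign : c.FiniteSignChanges) (x : ℝ) :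
    ∃ q, x < q ∧ ((∀ s ∈ Icc x q, 0 ≤ c.k s) ∨ (∀ s ∈ Icc x q, c.k s ≤ 0)) := by
  classical
  obtain ⟨n, t, ht0, htn, hm, hs⟩ := hsign
  have hL := c.L_pos
  have hn : 0 < n := by
    rcases Nat.eq_zero_or_pos n with h|h
    · exfalso; rw [h] at htn; have := ht0.symm.trans htn; linarith
    · exact h
  set m' : ℤ := ⌊x / c.L⌋ with hm'
  have hfl : (m' : ℝ) * c.L ≤ x := by
    have h1 := Int.floor_le (x / c.L)
    have h2 := mul_le_mul_of_nonneg_right h1 hL.le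
    rwa [div_mul_cancel₀ x hL.ne'] at h2
  have hfu : x < ((m' : ℝ) + 1) * c.L := by
    have h2 := Int.lt_floor_add_one (x / c.L)
    have h3 := mul_lt_mul_of_pos_right h2 hL
    rwa [div_mul_cancel₀ x hL.ne'] at h3
  have hx₀l : 0 ≤ x - m' * c.L := by linarith
  have hx₀u : x - m' * c.L < c.L := by nlinarith [hfu]
  set i := Nat.findGreatest (fun j => t j ≤ x - m' * c.L) n with hi
  have hP0 : t 0 ≤ x - m' * c.L := by rw [ht0]; exact hx₀l
  have hPi : t i ≤ x - m' * c.L := by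
    rw [hi]; exact Nat.findGreatest_spec (P := fun j => t j ≤ x - (m' : ℝ) * c.L) (Nat.zero_le n) hP0
  have hin : i ≤ n := by rw [hi]; exact Nat.findGreatest_le n
  have hilt : i < n := by
    rcases lt_or_eq_of_le hin with h|h
    · exact h
    · exfalso; rw [h, htn] at hPi; linarith
  have hnext : x - m' * c.L < t (i+1) := by
    by_contra hcon; push_neg at hcon
    have h2 : i + 1 ≤ Nat.findGreatest (fun j => t j ≤ x - (m' : ℝ) * c.L) n :=
      Nat.le_findGreatest (by omega) hcon
    rw [← hi] at h2; omega
  refine ⟨t (i+1) + m' * c.L, by linarith, ?_⟩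
  have hmem : ∀ s ∈ Icc x (t (i+1) + (m' : ℝ) * c.L), s - m' * c.L ∈ Icc (t i) (t (i+1)) := by
    intro s hsx
    exact ⟨by linarith [hsx.1], by linarith [hsx.2]⟩
  rcases hs i hilt with h|h
  · left; intro s hsx
    rw [← kShiftAux c s m']; exact h _ (hmem s hsx)
  · right; intro s hsx
    rw [← kShiftAux c s m']; exact h _ (hmem s hsx)

lemma coverLeftAux (c : PC2ClosedCurve) (hsign : c.FiniteSignChanges) (x : ℝ) :
    ∃ p, p < x ∧ ((∀ s ∈ Icc p x, 0 ≤ c.k s) ∨ (∀ s ∈ Icc p x, c.k s ≤ 0)) := by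
  classical
  obtain ⟨n, t, ht0, htn, hm, hs⟩ := hsign
  have hL := c.L_pos
  have hn : 0 < n := by
    rcases Nat.eq_zero_or_pos n with h|h
    · exfalso; rw [h] at htn; have := ht0.symm.trans htn; linarith
    · exact h
  set m' : ℤ := ⌈x / c.L⌉ - 1 with hm'
  have hcast : (m' : ℝ) = (⌈x / c.L⌉ : ℝ) - 1 := by rw [hm']; push_cast; ring
  have hfl : (m' : ℝ) * c.L < x := by
    have h2 := Int.ceil_lt_add_one (x / c.L)
    have hm'lt : (m' : ℝ) < x / c.L := by rw [hcast]; linarith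
    have h3 := mul_lt_mul_of_pos_right hm'lt hL
    rwa [div_mul_cancel₀ x hL.ne'] at h3
  have hfu : x ≤ ((m' : ℝ) + 1) * c.L := by
    have h1 := Int.le_ceil (x / c.L)
    have h2 := mul_le_mul_of_nonneg_right h1 hL.le
    rw [div_mul_cancel₀ x hL.ne'] at h2
    rw [hcast]; calc x ≤ (⌈x / c.L⌉ : ℝ) * c.L := h2
      _ = ((⌈x / c.L⌉ : ℝ) - 1 + 1) * c.L := by ring
  have hx₀l : 0 < x - m' * c.L := by linarith
  have hx₀u : x - m' * c.L ≤ c.L := by nlinarith [hfu]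
  have hex : ∃ j, x - m' * c.L ≤ t j := ⟨n, by rw [htn]; exact hx₀u⟩
  set i := Nat.find hex with hi
  have hPi : x - m' * c.L ≤ t i := by rw [hi]; exact Nat.find_spec hex
  have hile : i ≤ n := by rw [hi]; exact Nat.find_le (by rw [htn]; exact hx₀u)
  have hipos : 0 < i := by
    rcases Nat.eq_zero_or_pos i with h|h
    · exfalso; rw [h, ht0] at hPi; linarith
    · exact h
  have hprev : t (i-1) < x - m' * c.L := by
    by_contra hcon; push_neg at hcon
    have := Nat.find_min hex (m := i - 1) (by omega)
    exact this hcon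
  have hi1 : i - 1 + 1 = i := by omega
  refine ⟨t (i-1) + m' * c.L, by linarith, ?_⟩
  have hmem : ∀ s ∈ Icc (t (i-1) + (m' : ℝ) * c.L) x, s - m' * c.L ∈ Icc (t (i-1)) (t (i-1+1)) := by
    intro s hsx
    rw [hi1]
    exact ⟨by linarith [hsx.1], by linarith [hsx.2]⟩
  rcases hs (i-1) (by omega) with h|h
  · left; intro s hsx
    rw [← kShiftAux c s m']; exact h _ (hmem s hsx)
  · right; intro s hsx
    rw [← kShiftAux c s m']; exact h _ (hmem s hsx)


lemma negArcAux (c : PC2ClosedCurve) (hsign : c.FiniteSignChanges) (hKpi : c.KPi) :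
    ∀ u v : ℝ, u ≤ v → v - u ≤ c.L → (∀ s ∈ Icc u v, c.k s ≤ 0) →
    -π < ∫ s in u..v, c.k s := by
  intro u v huv hlen hneg
  have hπ := Real.pi_pos
  have hL := c.L_pos
  rcases eq_or_lt_of_le huv with rfl|huv'
  · rw [intervalIntegral.integral_same]; linarith
  by_cases hz : ∀ s ∈ Icc u v, c.k s = 0
  · rw [intZeroAux c huv hz]; linarith
  push_neg at hz; obtain ⟨s₀, hs₀m, hs₀⟩ := hz
  set X : Set ℝ := {x | v - c.L ≤ x ∧ x ≤ u ∧ ∀ s ∈ Icc x u, c.k s ≤ 0} with hX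
  have huX : u ∈ X := ⟨by linarith, le_rfl, fun s hs => hneg s ⟨hs.1, hs.2.trans huv⟩⟩
  have hXne : X.Nonempty := ⟨u, huX⟩
  have hXbd : BddBelow X := ⟨v - c.L, fun x hx => hx.1⟩
  set a0 := sInf X with ha0
  have hau : a0 ≤ u := csInf_le hXbd huX
  have hal : v - c.L ≤ a0 := le_csInf hXne (fun x hx => hx.1)
  have h1 : ∀ s, a0 < s → s ≤ u → c.k s ≤ 0 := by
    intro s hs hsu
    obtain ⟨x, hxX, hxs⟩ := exists_lt_of_csInf_lt hXne hs
    exact hxX.2.2 s ⟨hxs.le, hsu⟩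
  have AA : ∃ A, v - c.L ≤ A ∧ A ≤ u ∧ (∀ s ∈ Icc A u, c.k s ≤ 0) ∧
      (∀ x ∈ X, (∫ s in A..u, c.k s) ≤ ∫ s in x..u, c.k s) := by
    by_cases hka : c.k a0 ≤ 0
    · have hAneg : ∀ s ∈ Icc a0 u, c.k s ≤ 0 := by
        intro s hs
        rcases eq_or_lt_of_le hs.1 with h|h
        · rw [← h]; exact hka
        · exact h1 s h hs.2
      refine ⟨a0, hal, hau, hAneg, ?_⟩
      intro x hx
      have hax : a0 ≤ x := csInf_le hXbd hx
      have hsp := splitIntAux c a0 x u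
      have h2 : (∫ s in a0..x, c.k s) ≤ 0 :=
        intNonposAux c hax (fun s hs => hAneg s ⟨hs.1, hs.2.trans hx.2.1⟩)
      linarith
    · push_neg at hka
      have hau' : a0 < u := by
        rcases eq_or_lt_of_le hau with h|h
        · exfalso; have := hneg u ⟨le_rfl, huv⟩; rw [h] at hka; linarith
        · exact h
      obtain ⟨q, hq, hsq⟩ := coverRightAux c hsign a0
      have hqpos : ∀ s ∈ Icc a0 q, 0 ≤ c.k s := by
        rcases hsq with h|h
        · exact h
        · exfalso; have := h a0 ⟨le_rfl, hq.le⟩; linarith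
      set A := min q u with hA
      have haA : a0 < A := lt_min hq hau'
      have hzero : ∀ s, a0 < s → s ≤ A → c.k s = 0 := by
        intro s h h'
        have h2 := h1 s h (h'.trans (min_le_right _ _))
        have h3 := hqpos s ⟨h.le, h'.trans (min_le_left _ _)⟩
        linarith
      have hAneg : ∀ s ∈ Icc A u, c.k s ≤ 0 := fun s hs => h1 s (lt_of_lt_of_le haA hs.1) hs.2
      refine ⟨A, by linarith, min_le_right _ _, hAneg, ?_⟩
      intro x hx
      have hax : a0 ≤ x := csInf_le hXbd hx
      have hax' : a0 < x := by
        rcases eq_or_lt_of_le hax with h|h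
        · exfalso; have := hx.2.2 x ⟨le_rfl, hx.2.1⟩; rw [← h] at this; linarith
        · exact h
      rcases le_or_gt A x with h|h
      · have hsp := splitIntAux c A x u
        have h2 : (∫ s in A..x, c.k s) ≤ 0 :=
          intNonposAux c h (fun s hs => hAneg s ⟨hs.1, hs.2.trans hx.2.1⟩)
        linarith
      · have hsp := splitIntAux c x A u
        have h2 : (∫ s in x..A, c.k s) = 0 :=
          intZeroAux c h.le (fun s hs => hzero s (lt_of_lt_of_le hax' hs.1) hs.2)
        linarith
  set Y : Set ℝ := {y | v ≤ y ∧ y ≤ u + c.L ∧ ∀ s ∈ Icc v y, c.k s ≤ 0} with hY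
  have hvY : v ∈ Y := ⟨le_rfl, by linarith, fun s hs => hneg s ⟨huv.trans hs.1, hs.2⟩⟩
  have hYne : Y.Nonempty := ⟨v, hvY⟩
  have hYbd : BddAbove Y := ⟨u + c.L, fun y hy => hy.2.1⟩
  set b0 := sSup Y with hb0
  have hvb : v ≤ b0 := le_csSup hYbd hvY
  have hbu : b0 ≤ u + c.L := csSup_le hYne (fun y hy => hy.2.1)
  have h1' : ∀ s, v ≤ s → s < b0 → c.k s ≤ 0 := by
    intro s hvs hs
    obtain ⟨y, hyY, hsy⟩ := exists_lt_of_lt_csSup hYne hs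
    exact hyY.2.2 s ⟨hvs, hsy.le⟩
  have BB : ∃ B, v ≤ B ∧ B ≤ u + c.L ∧ (∀ s ∈ Icc v B, c.k s ≤ 0) ∧
      (∀ y ∈ Y, (∫ s in v..B, c.k s) ≤ ∫ s in v..y, c.k s) := by
    by_cases hkb : c.k b0 ≤ 0
    · have hBneg : ∀ s ∈ Icc v b0, c.k s ≤ 0 := by
        intro s hs
        rcases eq_or_lt_of_le hs.2 with h|h
        · rw [h]; exact hkb
        · exact h1' s hs.1 h
      refine ⟨b0, hvb, hbu, hBneg, ?_⟩
      intro y hy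
      have hyb : y ≤ b0 := le_csSup hYbd hy
      have hsp := splitIntAux c v y b0
      have h2 : (∫ s in y..b0, c.k s) ≤ 0 :=
        intNonposAux c hyb (fun s hs => hBneg s ⟨hy.1.trans hs.1, hs.2⟩)
      linarith
    · push_neg at hkb
      have hvb' : v < b0 := by
        rcases eq_or_lt_of_le hvb with h|h
        · exfalso; have := hneg v ⟨huv, le_rfl⟩; rw [← h] at hkb; linarith
        · exact h
      obtain ⟨p, hp, hsp'⟩ := coverLeftAux c hsign b0
      have hppos : ∀ s ∈ Icc p b0, 0 ≤ c.k s := by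
        rcases hsp' with h|h
        · exact h
        · exfalso; have := h b0 ⟨hp.le, le_rfl⟩; linarith
      set B := max p v with hB
      have hBb : B < b0 := max_lt hp hvb'
      have hzero : ∀ s, B ≤ s → s < b0 → c.k s = 0 := by
        intro s h h'
        have h2 := h1' s (le_trans (le_max_right _ _) h) h'
        have h3 := hppos s ⟨le_trans (le_max_left _ _) h, h'.le⟩
        linarith
      have hBneg : ∀ s ∈ Icc v B, c.k s ≤ 0 := fun s hs => h1' s hs.1 (lt_of_le_of_lt hs.2 hBb)
      refine ⟨B, le_max_right _ _, by linarith, hBneg, ?_⟩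
      intro y hy
      have hyb : y ≤ b0 := le_csSup hYbd hy
      rcases le_or_gt y B with h|h
      · have hsp := splitIntAux c v y B
        have h2 : (∫ s in y..B, c.k s) ≤ 0 :=
          intNonposAux c h (fun s hs => hBneg s ⟨hy.1.trans hs.1, hs.2⟩)
        linarith
      · have hyb' : y < b0 := by
          rcases eq_or_lt_of_le hyb with he|he
          · exfalso; have := hy.2.2 y ⟨hy.1, le_rfl⟩; rw [he] at this; linarith
          · exact he
        have hsp := splitIntAux c v B y
        have h2 : (∫ s in B..y, c.k s) = 0 :=
          intZeroAux c h.le (fun s hs => hzero s hs.1 (lt_of_le_of_lt hs.2 hyb'))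
        linarith
  obtain ⟨A, hA1, hA2, hA3, hA4⟩ := AA
  obtain ⟨B, hB1, hB2, hB3, hB4⟩ := BB
  have hsplit : ∀ x y : ℝ, (∫ s in x..y, c.k s) =
      (∫ s in x..u, c.k s) + (∫ s in u..v, c.k s) + (∫ s in v..y, c.k s) := by
    intro x y
    have h1 := splitIntAux c x u y
    have h2 := splitIntAux c u v y
    linarith
  have hIAu : (∫ s in A..u, c.k s) ≤ 0 := intNonposAux c hA2 hA3
  have hIvB : (∫ s in v..B, c.k s) ≤ 0 := intNonposAux c hB1 hB3
  rcases le_or_gt (B - A) c.L with hcap|hcap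
  · have harc : c.IsConcaveArc A B := by
      refine ⟨by linarith, hcap, ?_, ?_⟩
      · intro s hs
        rcases le_total s u with h|h
        · exact hA3 s ⟨hs.1, h⟩
        · rcases le_total s v with h'|h'
          · exact hneg s ⟨h, h'⟩
          · exact hB3 s ⟨h', hs.2⟩
      · intro hall
        exact hs₀ (hall s₀ ⟨by linarith [hs₀m.1], by linarith [hs₀m.2]⟩)
    have hmax : c.IsMaxConcaveArc A B := by
      refine ⟨harc, ?_⟩
      intro a' b' harc' ha' hb'
      obtain ⟨hab', hlen', hneg', _⟩ := harc'
      have ha'X : a' ∈ X := ⟨by linarith, by linarith,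
        fun s hs => hneg' s ⟨hs.1, by linarith [hs.2]⟩⟩
      have hb'Y : b' ∈ Y := ⟨by linarith, by linarith,
        fun s hs => hneg' s ⟨by linarith [hs.1], hs.2⟩⟩
      show |∫ s in a'..b', c.k s| ≤ |∫ s in A..B, c.k s|
      have e1 : (∫ s in a'..b', c.k s) ≤ 0 := intNonposAux c hab'.le hneg'
      have e2 : (∫ s in A..B, c.k s) ≤ 0 := intNonposAux c (by linarith) harc.2.2.1
      rw [abs_of_nonpos e1, abs_of_nonpos e2]
      have d1 := hsplit a' b'
      have d2 := hsplit A B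
      have o1 := hA4 a' ha'X
      have o2 := hB4 b' hb'Y
      linarith
    have hKv : -π < ∫ s in A..B, c.k s := (hKpi.2 A B hmax).1
    have d2 := hsplit A B
    linarith
  · set A' := B - c.L with hA'
    have hAA' : A ≤ A' := by rw [hA']; linarith
    have hA'u : A' ≤ u := by rw [hA']; linarith
    have harc : c.IsConcaveArc A' B := by
      refine ⟨by rw [hA']; linarith, by rw [hA']; linarith, ?_, ?_⟩
      · intro s hs
        rcases le_total s u with h|h
        · exact hA3 s ⟨le_trans hAA' hs.1, h⟩
        · rcases le_total s v with h'|h'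
          · exact hneg s ⟨h, h'⟩
          · exact hB3 s ⟨h', hs.2⟩
      · intro hall
        refine hs₀ (hall s₀ ⟨?_, by linarith [hs₀m.2]⟩)
        rw [hA']; linarith [hs₀m.1]
    have hmax : c.IsMaxConcaveArc A' B := by
      refine ⟨harc, ?_⟩
      intro a' b' harc' ha' hb'
      obtain ⟨hab', hlen', -, -⟩ := harc'
      have e1 : a' = A' := le_antisymm ha' (by linarith)
      have e2 : b' = B := le_antisymm (by linarith) hb'
      rw [e1, e2]
    have hKv : -π < ∫ s in A'..B, c.k s := (hKpi.2 A' B hmax).1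
    have d2 := hsplit A' B
    have hIA'u : (∫ s in A'..u, c.k s) ≤ 0 :=
      intNonposAux c hA'u (fun s hs => hA3 s ⟨le_trans hAA' hs.1, hs.2⟩)
    linarith
lemma posArcAux (c : PC2ClosedCurve) (hsign : c.FiniteSignChanges) (hKpi : c.KPi) :
    ∀ u v : ℝ, u < v → v - u ≤ c.L → (∀ s ∈ Icc u v, 0 ≤ c.k s) →
    (∃ s₀ ∈ Icc u v, c.k s₀ ≠ 0) →
    ∃ P Q : ℝ, P ≤ u ∧ v ≤ Q ∧ (∀ s ∈ Icc P u, 0 ≤ c.k s) ∧ (∀ s ∈ Icc v Q, 0 ≤ c.k s) ∧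
      π < ∫ s in P..Q, c.k s := by
  intro u v huv' hlen hpos hex
  obtain ⟨s₀, hs₀m, hs₀⟩ := hex
  have huv : u ≤ v := huv'.le
  have hπ := Real.pi_pos
  have hL := c.L_pos
  set X : Set ℝ := {x | v - c.L ≤ x ∧ x ≤ u ∧ ∀ s ∈ Icc x u, 0 ≤ c.k s} with hX
  have huX : u ∈ X := ⟨by linarith, le_rfl, fun s hs => hpos s ⟨hs.1, hs.2.trans huv⟩⟩
  have hXne : X.Nonempty := ⟨u, huX⟩
  have hXbd : BddBelow X := ⟨v - c.L, fun x hx => hx.1⟩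
  set a0 := sInf X with ha0
  have hau : a0 ≤ u := csInf_le hXbd huX
  have hal : v - c.L ≤ a0 := le_csInf hXne (fun x hx => hx.1)
  have h1 : ∀ s, a0 < s → s ≤ u → 0 ≤ c.k s := by
    intro s hs hsu
    obtain ⟨x, hxX, hxs⟩ := exists_lt_of_csInf_lt hXne hs
    exact hxX.2.2 s ⟨hxs.le, hsu⟩
  have AA : ∃ A, v - c.L ≤ A ∧ A ≤ u ∧ (∀ s ∈ Icc A u, 0 ≤ c.k s) ∧
      (∀ x ∈ X, (∫ s in x..u, c.k s) ≤ ∫ s in A..u, c.k s) := by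
    by_cases hka : 0 ≤ c.k a0
    · have hApos : ∀ s ∈ Icc a0 u, 0 ≤ c.k s := by
        intro s hs
        rcases eq_or_lt_of_le hs.1 with h|h
        · rw [← h]; exact hka
        · exact h1 s h hs.2
      refine ⟨a0, hal, hau, hApos, ?_⟩
      intro x hx
      have hax : a0 ≤ x := csInf_le hXbd hx
      have hsp := splitIntAux c a0 x u
      have h2 : 0 ≤ ∫ s in a0..x, c.k s :=
        intNonnegAux c hax (fun s hs => hApos s ⟨hs.1, hs.2.trans hx.2.1⟩)
      linarith
    · push_neg at hka
      have hau' : a0 < u := by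
        rcases eq_or_lt_of_le hau with h|h
        · exfalso; have := hpos u ⟨le_rfl, huv⟩; rw [h] at hka; linarith
        · exact h
      obtain ⟨q, hq, hsq⟩ := coverRightAux c hsign a0
      have hqneg : ∀ s ∈ Icc a0 q, c.k s ≤ 0 := by
        rcases hsq with h|h
        · exfalso; have := h a0 ⟨le_rfl, hq.le⟩; linarith
        · exact h
      set A := min q u with hA
      have haA : a0 < A := lt_min hq hau'
      have hzero : ∀ s, a0 < s → s ≤ A → c.k s = 0 := by
        intro s h h'
        have h2 := h1 s h (h'.trans (min_le_right _ _))
        have h3 := hqneg s ⟨h.le, h'.trans (min_le_left _ _)⟩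
        linarith
      have hApos : ∀ s ∈ Icc A u, 0 ≤ c.k s := fun s hs => h1 s (lt_of_lt_of_le haA hs.1) hs.2
      refine ⟨A, by linarith, min_le_right _ _, hApos, ?_⟩
      intro x hx
      have hax : a0 ≤ x := csInf_le hXbd hx
      have hax' : a0 < x := by
        rcases eq_or_lt_of_le hax with h|h
        · exfalso; have := hx.2.2 x ⟨le_rfl, hx.2.1⟩; rw [← h] at this; linarith
        · exact h
      rcases le_or_gt A x with h|h
      · have hsp := splitIntAux c A x u
        have h2 : 0 ≤ ∫ s in A..x, c.k s :=
          intNonnegAux c h (fun s hs => hApos s ⟨hs.1, hs.2.trans hx.2.1⟩)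
        linarith
      · have hsp := splitIntAux c x A u
        have h2 : (∫ s in x..A, c.k s) = 0 :=
          intZeroAux c h.le (fun s hs => hzero s (lt_of_lt_of_le hax' hs.1) hs.2)
        linarith
  set Y : Set ℝ := {y | v ≤ y ∧ y ≤ u + c.L ∧ ∀ s ∈ Icc v y, 0 ≤ c.k s} with hY
  have hvY : v ∈ Y := ⟨le_rfl, by linarith, fun s hs => hpos s ⟨huv.trans hs.1, hs.2⟩⟩
  have hYne : Y.Nonempty := ⟨v, hvY⟩
  have hYbd : BddAbove Y := ⟨u + c.L, fun y hy => hy.2.1⟩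
  set b0 := sSup Y with hb0
  have hvb : v ≤ b0 := le_csSup hYbd hvY
  have hbu : b0 ≤ u + c.L := csSup_le hYne (fun y hy => hy.2.1)
  have h1' : ∀ s, v ≤ s → s < b0 → 0 ≤ c.k s := by
    intro s hvs hs
    obtain ⟨y, hyY, hsy⟩ := exists_lt_of_lt_csSup hYne hs
    exact hyY.2.2 s ⟨hvs, hsy.le⟩
  have BB : ∃ B, v ≤ B ∧ B ≤ u + c.L ∧ (∀ s ∈ Icc v B, 0 ≤ c.k s) ∧
      (∀ y ∈ Y, (∫ s in v..y, c.k s) ≤ ∫ s in v..B, c.k s) := by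
    by_cases hkb : 0 ≤ c.k b0
    · have hBpos : ∀ s ∈ Icc v b0, 0 ≤ c.k s := by
        intro s hs
        rcases eq_or_lt_of_le hs.2 with h|h
        · rw [h]; exact hkb
        · exact h1' s hs.1 h
      refine ⟨b0, hvb, hbu, hBpos, ?_⟩
      intro y hy
      have hyb : y ≤ b0 := le_csSup hYbd hy
      have hsp := splitIntAux c v y b0
      have h2 : 0 ≤ ∫ s in y..b0, c.k s :=
        intNonnegAux c hyb (fun s hs => hBpos s ⟨hy.1.trans hs.1, hs.2⟩)
      linarith
    · push_neg at hkb
      have hvb' : v < b0 := by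
        rcases eq_or_lt_of_le hvb with h|h
        · exfalso; have := hpos v ⟨huv, le_rfl⟩; rw [← h] at hkb; linarith
        · exact h
      obtain ⟨p, hp, hsp'⟩ := coverLeftAux c hsign b0
      have hpneg : ∀ s ∈ Icc p b0, c.k s ≤ 0 := by
        rcases hsp' with h|h
        · exfalso; have := h b0 ⟨hp.le, le_rfl⟩; linarith
        · exact h
      set B := max p v with hB
      have hBb : B < b0 := max_lt hp hvb'
      have hzero : ∀ s, B ≤ s → s < b0 → c.k s = 0 := by
        intro s h h'
        have h2 := h1' s (le_trans (le_max_right _ _) h) h'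
        have h3 := hpneg s ⟨le_trans (le_max_left _ _) h, h'.le⟩
        linarith
      have hBpos : ∀ s ∈ Icc v B, 0 ≤ c.k s := fun s hs => h1' s hs.1 (lt_of_le_of_lt hs.2 hBb)
      refine ⟨B, le_max_right _ _, by linarith, hBpos, ?_⟩
      intro y hy
      have hyb : y ≤ b0 := le_csSup hYbd hy
      rcases le_or_gt y B with h|h
      · have hsp := splitIntAux c v y B
        have h2 : 0 ≤ ∫ s in y..B, c.k s :=
          intNonnegAux c h (fun s hs => hBpos s ⟨hy.1.trans hs.1, hs.2⟩)
        linarith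
      · have hyb' : y < b0 := by
          rcases eq_or_lt_of_le hyb with he|he
          · exfalso; have := hy.2.2 y ⟨hy.1, le_rfl⟩; rw [he] at this; linarith
          · exact he
        have hsp := splitIntAux c v B y
        have h2 : (∫ s in B..y, c.k s) = 0 :=
          intZeroAux c h.le (fun s hs => hzero s hs.1 (lt_of_le_of_lt hs.2 hyb'))
        linarith
  obtain ⟨A, hA1, hA2, hA3, hA4⟩ := AA
  obtain ⟨B, hB1, hB2, hB3, hB4⟩ := BB
  have hsplit : ∀ x y : ℝ, (∫ s in x..y, c.k s) =
      (∫ s in x..u, c.k s) + (∫ s in u..v, c.k s) + (∫ s in v..y, c.k s) := by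
    intro x y
    have h1 := splitIntAux c x u y
    have h2 := splitIntAux c u v y
    linarith
  have hIAu : 0 ≤ ∫ s in A..u, c.k s := intNonnegAux c hA2 hA3
  have hIvB : 0 ≤ ∫ s in v..B, c.k s := intNonnegAux c hB1 hB3
  rcases le_or_gt (B - A) c.L with hcap|hcap
  · have harc : c.IsConvexArc A B := by
      refine ⟨by linarith, hcap, ?_, ?_⟩
      · intro s hs
        rcases le_total s u with h|h
        · exact hA3 s ⟨hs.1, h⟩
        · rcases le_total s v with h'|h'
          · exact hpos s ⟨h, h'⟩
          · exact hB3 s ⟨h', hs.2⟩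
      · intro hall
        exact hs₀ (hall s₀ ⟨by linarith [hs₀m.1], by linarith [hs₀m.2]⟩)
    have hmax : c.IsMaxConvexArc A B := by
      refine ⟨harc, ?_⟩
      intro a' b' harc' ha' hb'
      obtain ⟨hab', hlen', hpos', _⟩ := harc'
      have ha'X : a' ∈ X := ⟨by linarith, by linarith,
        fun s hs => hpos' s ⟨hs.1, by linarith [hs.2]⟩⟩
      have hb'Y : b' ∈ Y := ⟨by linarith, by linarith,
        fun s hs => hpos' s ⟨by linarith [hs.1], hs.2⟩⟩
      show |∫ s in a'..b', c.k s| ≤ |∫ s in A..B, c.k s|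
      have e1 : 0 ≤ ∫ s in a'..b', c.k s := intNonnegAux c hab'.le hpos'
      have e2 : 0 ≤ ∫ s in A..B, c.k s := intNonnegAux c (by linarith) harc.2.2.1
      rw [abs_of_nonneg e1, abs_of_nonneg e2]
      have d1 := hsplit a' b'
      have d2 := hsplit A B
      have o1 := hA4 a' ha'X
      have o2 := hB4 b' hb'Y
      linarith
    have hKv : π < ∫ s in A..B, c.k s := hKpi.1 A B hmax
    exact ⟨A, B, hA2, hB1, hA3, hB3, hKv⟩
  · set A' := B - c.L with hA'
    have hAA' : A ≤ A' := by rw [hA']; linarith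
    have hA'u : A' ≤ u := by rw [hA']; linarith
    have hA'pos : ∀ s ∈ Icc A' u, 0 ≤ c.k s := fun s hs => hA3 s ⟨le_trans hAA' hs.1, hs.2⟩
    have harc : c.IsConvexArc A' B := by
      refine ⟨by rw [hA']; linarith, by rw [hA']; linarith, ?_, ?_⟩
      · intro s hs
        rcases le_total s u with h|h
        · exact hA3 s ⟨le_trans hAA' hs.1, h⟩
        · rcases le_total s v with h'|h'
          · exact hpos s ⟨h, h'⟩
          · exact hB3 s ⟨h', hs.2⟩
      · intro hall
        refine hs₀ (hall s₀ ⟨?_, by linarith [hs₀m.2]⟩)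
        rw [hA']; linarith [hs₀m.1]
    have hmax : c.IsMaxConvexArc A' B := by
      refine ⟨harc, ?_⟩
      intro a' b' harc' ha' hb'
      obtain ⟨hab', hlen', -, -⟩ := harc'
      have e1 : a' = A' := le_antisymm ha' (by linarith)
      have e2 : b' = B := le_antisymm (by linarith) hb'
      rw [e1, e2]
    have hKv : π < ∫ s in A'..B, c.k s := hKpi.1 A' B hmax
    exact ⟨A', B, hA'u, hB1, hA'pos, hB3, hKv⟩

lemma partExistsAux (c : PC2ClosedCurve) (hsign : c.FiniteSignChanges) {a b : ℝ}
    (hab : a ≤ b) (hlen : b - a ≤ c.L) :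
    ∃ (m : ℕ) (v : ℕ → ℝ), v 0 = a ∧ v m = b ∧ (∀ i, i < m → v i ≤ v (i+1)) ∧
      (∀ i, i < m → (∀ s ∈ Icc (v i) (v (i+1)), 0 ≤ c.k s) ∨
        (∀ s ∈ Icc (v i) (v (i+1)), c.k s ≤ 0)) := by
  classical
  obtain ⟨n, t, ht0, htn, hm, hs⟩ := hsign
  have hL := c.L_pos
  have hn : 0 < n := by
    rcases Nat.eq_zero_or_pos n with h|h
    · exfalso; rw [h] at htn; have := ht0.symm.trans htn; linarith
    · exact h
  have hmono := chainMonoAux hm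
  set m' : ℤ := ⌊a / c.L⌋ with hm'
  have hfl : (m' : ℝ) * c.L ≤ a := by
    have h1 := Int.floor_le (a / c.L)
    have h2 := mul_le_mul_of_nonneg_right h1 hL.le
    rwa [div_mul_cancel₀ a hL.ne'] at h2
  have hfu : a < ((m' : ℝ) + 1) * c.L := by
    have h2 := Int.lt_floor_add_one (a / c.L)
    have h3 := mul_lt_mul_of_pos_right h2 hL
    rwa [div_mul_cancel₀ a hL.ne'] at h3
  set q : ℕ → ℝ := fun j => if j ≤ n then t j + (m' : ℝ) * c.L
    else t (j - n) + ((m' : ℝ) + 1) * c.L with hq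
  have hq0 : q 0 = (m' : ℝ) * c.L := by
    simp only [hq, if_pos (Nat.zero_le n), ht0]; ring
  have hq2n : q (2*n) = c.L + ((m' : ℝ) + 1) * c.L := by
    simp only [hq, if_neg (by omega : ¬ 2*n ≤ n)]
    rw [show 2*n - n = n from by omega, htn]
  have hqmono : ∀ j, j < 2*n → q j ≤ q (j+1) := by
    intro j hj
    by_cases h1 : j + 1 ≤ n
    · simp only [hq, if_pos h1, if_pos (by omega : j ≤ n)]
      have := hm j (by omega)
      linarith
    · by_cases h2 : j ≤ n
      · have hjn : j = n := by omega
        subst hjn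
        simp only [hq, if_pos le_rfl, if_neg h1]
      
        have h01 : t 0 ≤ t (j + 1 - j) := hmono 0 (j+1-j) (Nat.zero_le _) (by omega)
        rw [show j + 1 - j = 1 from by omega] at h01
        rw [htn, show j + 1 - j = 1 from by omega]
        rw [ht0] at h01
        linarith
      · simp only [hq, if_neg (by omega : ¬ j ≤ n), if_neg h1]
        have := hm (j - n) (by omega)
        rw [show j + 1 - n = (j - n) + 1 from by omega]
        linarith
  have hqsign : ∀ j, j < 2*n → (∀ s ∈ Icc (q j) (q (j+1)), 0 ≤ c.k s) ∨
      (∀ s ∈ Icc (q j) (q (j+1)), c.k s ≤ 0) := by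
    intro j hj
    by_cases h1 : j + 1 ≤ n
    · have hcell := hs j (by omega)
      have heq : ∀ s ∈ Icc (q j) (q (j+1)), s - (m' : ℝ) * c.L ∈ Icc (t j) (t (j+1)) := by
        intro s hsm
        simp only [hq, if_pos h1, if_pos (by omega : j ≤ n)] at hsm
        exact ⟨by linarith [hsm.1], by linarith [hsm.2]⟩
      rcases hcell with h|h
      · left; intro s hsm; rw [← kShiftAux c s m']; exact h _ (heq s hsm)
      · right; intro s hsm; rw [← kShiftAux c s m']; exact h _ (heq s hsm)
    · have hsh : ∀ (s : ℝ), c.k (s - ((m' : ℝ) + 1) * c.L) = c.k s := by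
        intro s
        have := kShiftAux c s (m' + 1)
        rwa [show ((m' + 1 : ℤ) : ℝ) = (m' : ℝ) + 1 from by push_cast; ring] at this
      by_cases h2 : j ≤ n
      · have hjn : j = n := by omega
        subst hjn
        have hcell := hs 0 hn
        have heq : ∀ s ∈ Icc (q j) (q (j+1)), s - ((m' : ℝ) + 1) * c.L ∈ Icc (t 0) (t 1) := by
          intro s hsm
          simp only [hq, if_pos le_rfl, if_neg h1, show j + 1 - j = 1 from by omega] at hsm
          rw [htn] at hsm
          rw [ht0]
          exact ⟨by linarith [hsm.1], by linarith [hsm.2]⟩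
        rcases hcell with h|h
        · left; intro s hsm; rw [← hsh s]; exact h _ (heq s hsm)
        · right; intro s hsm; rw [← hsh s]; exact h _ (heq s hsm)
      · have hcell := hs (j - n) (by omega)
        have heq : ∀ s ∈ Icc (q j) (q (j+1)),
            s - ((m' : ℝ) + 1) * c.L ∈ Icc (t (j - n)) (t (j - n + 1)) := by
          intro s hsm
          simp only [hq, if_neg (by omega : ¬ j ≤ n), if_neg h1,
            show j + 1 - n = (j - n) + 1 from by omega] at hsm
          exact ⟨by linarith [hsm.1], by linarith [hsm.2]⟩
        rcases hcell with h|h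
        · left; intro s hsm; rw [← hsh s]; exact h _ (heq s hsm)
        · right; intro s hsm; rw [← hsh s]; exact h _ (heq s hsm)
  refine ⟨2*n, fun j => max a (min b (q j)), ?_, ?_, ?_, ?_⟩
  · show max a (min b (q 0)) = a
    rw [hq0, min_eq_right (by linarith), max_eq_left (by linarith)]
  · show max a (min b (q (2*n))) = b
    rw [hq2n, min_eq_left (by linarith), max_eq_right hab]
  · intro i hi
    show max a (min b (q i)) ≤ max a (min b (q (i+1)))
    exact max_le_max le_rfl (min_le_min le_rfl (hqmono i hi))
  · intro i hi
    show (∀ s ∈ Icc (max a (min b (q i))) (max a (min b (q (i+1)))), 0 ≤ c.k s) ∨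
      (∀ s ∈ Icc (max a (min b (q i))) (max a (min b (q (i+1)))), c.k s ≤ 0)
    by_cases hdeg : max a (min b (q (i+1))) ≤ max a (min b (q i))
    · rcases le_total 0 (c.k (max a (min b (q i)))) with h|h
      · left; intro s hsm
        have he : s = max a (min b (q i)) := le_antisymm (hsm.2.trans hdeg) hsm.1
        rw [he]; exact h
      · right; intro s hsm
        have he : s = max a (min b (q i)) := le_antisymm (hsm.2.trans hdeg) hsm.1
        rw [he]; exact h
    · push_neg at hdeg
      have hqib : q i ≤ b := by
        by_contra hc; push_neg at hc
        have e1 : max a (min b (q i)) = b := by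
          rw [min_eq_left hc.le, max_eq_right hab]
        have e2 : max a (min b (q (i+1))) = b := by
          rw [min_eq_left (hc.le.trans (hqmono i hi)), max_eq_right hab]
        rw [e1, e2] at hdeg; exact lt_irrefl b hdeg
      have haq : a ≤ q (i+1) := by
        by_contra hc; push_neg at hc
        have e2 : max a (min b (q (i+1))) = a := by
          rw [min_eq_right (by linarith), max_eq_left (by linarith)]
        have e1 : a ≤ max a (min b (q i)) := le_max_left _ _
        rw [e2] at hdeg; linarith
      have hsub : Icc (max a (min b (q i))) (max a (min b (q (i+1)))) ⊆ Icc (q i) (q (i+1)) := by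
        intro s hsm
        constructor
        · have : min b (q i) = q i := min_eq_right hqib
          calc q i = min b (q i) := this.symm
            _ ≤ max a (min b (q i)) := le_max_right _ _
            _ ≤ s := hsm.1
        · have h2 : max a (min b (q (i+1))) ≤ q (i+1) :=
            max_le haq ((min_le_right _ _))
          exact hsm.2.trans h2
      rcases hqsign i hi with h|h
      · left; exact fun s hsm => h s (hsub hsm)
      · right; exact fun s hsm => h s (hsub hsm)

lemma coreAux (c : PC2ClosedCurve) (hsign : c.FiniteSignChanges) (hKpi : c.KPi) :
    ∀ m : ℕ, ∀ a b : ℝ, ∀ v : ℕ → ℝ, v 0 = a → v m = b →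
    (∀ i, i < m → v i ≤ v (i+1)) →
    (∀ i, i < m → (∀ s ∈ Icc (v i) (v (i+1)), 0 ≤ c.k s) ∨
      (∀ s ∈ Icc (v i) (v (i+1)), c.k s ≤ 0)) →
    b - a ≤ c.L → -π < ∫ s in a..b, c.k s := by
  intro m
  induction m using Nat.strong_induction_on with
  | _ m IH =>
  intro a b v h0 hmv hmon hsg hlen
  have hπ := Real.pi_pos
  have hvmono : ∀ i j, i ≤ j → j ≤ m → v i ≤ v j := chainMonoAux hmon
  rcases Nat.eq_zero_or_pos m with hm0|hm1
  · subst hm0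
    have hab2 : a = b := by rw [← h0]; exact hmv
    subst hab2
    rw [intervalIntegral.integral_same]; linarith
  have hab : a ≤ b := by
    rw [← h0, ← hmv]; exact hvmono 0 m (Nat.zero_le m) le_rfl
  rcases hsg 0 hm1 with hcell0|hcell0
  · -- first cell nonnegative: strip it
    have hv1a : a ≤ v 1 := by rw [← h0]; exact hmon 0 hm1
    have hv1b : v 1 ≤ b := by rw [← hmv]; exact hvmono 1 m hm1 le_rfl
    have IH1 : -π < ∫ s in (v 1)..b, c.k s := by
      refine IH (m-1) (by omega) (v 1) b (fun j => v (j+1)) rfl ?_ ?_ ?_ (by linarith)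
      · show v (m - 1 + 1) = b
        rw [show m - 1 + 1 = m from by omega]; exact hmv
      · intro i hi; exact hmon (i+1) (by omega)
      · intro i hi; exact hsg (i+1) (by omega)
    have hsp := splitIntAux c a (v 1) b
    have h01 : 0 ≤ ∫ s in a..(v 1), c.k s := by
      refine intNonnegAux c hv1a ?_
      intro s hs
      exact hcell0 s (by rw [h0]; exact hs)
    linarith
  · -- first cell nonpositive
    classical
    have hP1one : ∀ s ∈ Icc a (v 1), c.k s ≤ 0 := by
      intro s hs
      exact hcell0 s (by rw [h0]; exact hs)
    set r := Nat.findGreatest (fun j => ∀ s ∈ Icc a (v j), c.k s ≤ 0) m with hr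
    have hr1 : 1 ≤ r := by
      rw [hr]; exact Nat.le_findGreatest hm1 hP1one
    have hrm : r ≤ m := by rw [hr]; exact Nat.findGreatest_le m
    have hPr : ∀ s ∈ Icc a (v r), c.k s ≤ 0 := by
      rw [hr]
      exact Nat.findGreatest_spec (P := fun j => ∀ s ∈ Icc a (v j), c.k s ≤ 0) hm1 hP1one
    have hac : a ≤ v r := by rw [← h0]; exact hvmono 0 r (Nat.zero_le r) hrm
    have hcb : v r ≤ b := by rw [← hmv]; exact hvmono r m hrm le_rfl
    rcases eq_or_lt_of_le hrm with hrm'|hrm'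
    · -- r = m
      have hvrb : v r = b := by rw [hrm']; exact hmv
      have := negArcAux c hsign hKpi a (v r) hac (by rw [hvrb]; linarith) hPr
      rw [← hvrb]; exact this
    · -- r < m : there is a strictly positive point in cell r
      have hex : ∃ s ∈ Icc a (v (r+1)), 0 < c.k s := by
        by_contra hcon; push_neg at hcon
        have hP : ∀ s ∈ Icc a (v (r+1)), c.k s ≤ 0 := hcon
        have h2 : r + 1 ≤ Nat.findGreatest (fun j => ∀ s ∈ Icc a (v j), c.k s ≤ 0) m :=
          Nat.le_findGreatest (by omega) hP
        rw [← hr] at h2; omega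
      obtain ⟨sp, hspm, hsp0⟩ := hex
      have hkvr : c.k (v r) ≤ 0 := hPr (v r) ⟨hac, le_rfl⟩
      have hspgt : v r < sp := by
        rcases le_or_gt sp (v r) with h|h
        · exfalso; have := hPr sp ⟨hspm.1, h⟩; linarith
        · exact h
      have hcellr : ∀ s ∈ Icc (v r) (v (r+1)), 0 ≤ c.k s := by
        rcases hsg r hrm' with h|h
        · exact h
        · exfalso
          have h3 := h sp ⟨hspgt.le, hspm.2⟩
          linarith
      have hP2r1 : ∀ s ∈ Icc (v r) (v (r+1)), 0 ≤ c.k s := hcellr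
      set r' := Nat.findGreatest (fun j => ∀ s ∈ Icc (v r) (v j), 0 ≤ c.k s) m with hr'
      have hr'1 : r + 1 ≤ r' := by
        rw [hr']; exact Nat.le_findGreatest (by omega) hP2r1
      have hr'm : r' ≤ m := by rw [hr']; exact Nat.findGreatest_le m
      have hP'r' : ∀ s ∈ Icc (v r) (v r'), 0 ≤ c.k s := by
        rw [hr']
        exact Nat.findGreatest_spec (P := fun j => ∀ s ∈ Icc (v r) (v j), 0 ≤ c.k s)
          (by omega) hP2r1
      have hspd : sp ≤ v r' := le_trans hspm.2 (hvmono (r+1) r' hr'1 hr'm)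
      have hcd : v r < v r' := lt_of_lt_of_le hspgt hspd
      have hdb : v r' ≤ b := by rw [← hmv]; exact hvmono r' m hr'm le_rfl
      have hIac : -π < ∫ s in a..(v r), c.k s :=
        negArcAux c hsign hKpi a (v r) hac (by linarith) hPr
      rcases eq_or_lt_of_le hr'm with hr'm'|hr'm'
      · -- r' = m
        have hdbe : v r' = b := by rw [hr'm']; exact hmv
        have hcb2 : 0 ≤ ∫ s in (v r)..b, c.k s :=
          intNonnegAux c hcb (by rw [← hdbe]; exact hP'r')
        have hsp2 := splitIntAux c a (v r) b
        linarith
      · obtain ⟨P, Q, hPu, hvQ, hPk, hQk, hPQ⟩ :=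
          posArcAux c hsign hKpi (v r) (v r') hcd (by linarith)
            hP'r' ⟨sp, ⟨hspgt.le, hspd⟩, ne_of_gt hsp0⟩
        rcases lt_or_ge b Q with hQb|hQb
        · -- tail is all nonnegative
          have hpos2 : ∀ s ∈ Icc (v r) b, 0 ≤ c.k s := by
            intro s hs
            rcases le_total s (v r') with h|h
            · exact hP'r' s ⟨hs.1, h⟩
            · exact hQk s ⟨h, by linarith [hs.2]⟩
          have h2 : 0 ≤ ∫ s in (v r)..b, c.k s := intNonnegAux c hcb hpos2
          have hsp2 := splitIntAux c a (v r) b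
          linarith
        rcases lt_or_ge P a with hPa|hPa
        · -- curvature vanishes on [a, v r]; recurse on [v r, b]
          have hz : ∀ s ∈ Icc a (v r), c.k s = 0 := fun s hs =>
            le_antisymm (hPr s hs) (hPk s ⟨by linarith [hs.1], hs.2⟩)
          have h0' : (∫ s in a..(v r), c.k s) = 0 := intZeroAux c hac hz
          have IH2 : -π < ∫ s in (v r)..b, c.k s := by
            refine IH (m - r) (by omega) (v r) b (fun j => v (j + r)) ?_ ?_ ?_ ?_ (by linarith)
            · show v (0 + r) = v r
              rw [Nat.zero_add]
            · show v (m - r + r) = b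
              rw [show m - r + r = m from by omega]; exact hmv
            · intro i hi
              show v (i + r) ≤ v (i + 1 + r)
              rw [show i + 1 + r = i + r + 1 from by omega]
              exact hmon (i + r) (by omega)
            · intro i hi
              show (∀ s ∈ Icc (v (i + r)) (v (i + 1 + r)), 0 ≤ c.k s) ∨
                (∀ s ∈ Icc (v (i + r)) (v (i + 1 + r)), c.k s ≤ 0)
              rw [show i + 1 + r = i + r + 1 from by omega]
              exact hsg (i + r) (by omega)
          have hsp2 := splitIntAux c a (v r) b
          linarith
        · -- main case : a ≤ P and Q ≤ b
          have hIaP : -π < ∫ s in a..P, c.k s := by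
            refine negArcAux c hsign hKpi a P hPa (by linarith) ?_
            intro s hs
            exact hPr s ⟨hs.1, hs.2.trans hPu⟩
          have IH3 : -π < ∫ s in Q..b, c.k s := by
            refine IH (m - r') (by omega) Q b (fun j => max Q (v (j + r'))) ?_ ?_ ?_ ?_
              (by linarith)
            · show max Q (v (0 + r')) = Q
              rw [Nat.zero_add]; exact max_eq_left hvQ
            · show max Q (v (m - r' + r')) = b
              rw [show m - r' + r' = m from by omega, hmv]
              exact max_eq_right hQb
            · intro i hi
              show max Q (v (i + r')) ≤ max Q (v (i + 1 + r'))
              refine max_le_max le_rfl ?_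
              rw [show i + 1 + r' = i + r' + 1 from by omega]
              exact hmon (i + r') (by omega)
            · intro i hi
              show (∀ s ∈ Icc (max Q (v (i + r'))) (max Q (v (i + 1 + r'))), 0 ≤ c.k s) ∨
                (∀ s ∈ Icc (max Q (v (i + r'))) (max Q (v (i + 1 + r'))), c.k s ≤ 0)
              rw [show i + 1 + r' = i + r' + 1 from by omega]
              rcases le_or_gt Q (v (i + r' + 1)) with h|h
              · have hsub : Icc (max Q (v (i + r'))) (max Q (v (i + r' + 1))) ⊆
                    Icc (v (i + r')) (v (i + r' + 1)) := by
                  rw [max_eq_right h]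
                  intro s hs
                  exact ⟨le_trans (le_max_right _ _) hs.1, hs.2⟩
                rcases hsg (i + r') (by omega) with h'|h'
                · left; exact fun s hs => h' s (hsub hs)
                · right; exact fun s hs => h' s (hsub hs)
              · have e1 : max Q (v (i + r')) = Q :=
                  max_eq_left (le_of_lt (lt_of_le_of_lt (hmon (i + r') (by omega)) h))
                have e2 : max Q (v (i + r' + 1)) = Q := max_eq_left h.le
                rw [e1, e2]
                rcases le_total 0 (c.k Q) with h'|h'
                · left; intro s hs
                  have : s = Q := le_antisymm hs.2 hs.1
                  rw [this]; exact h'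
                · right; intro s hs
                  have : s = Q := le_antisymm hs.2 hs.1
                  rw [this]; exact h'
          have hsp1 := splitIntAux c a P b
          have hsp2 := splitIntAux c P Q b
          linarith

end Statement10Proof
/-- for a positively oriented simple closed curve of class `C¹`, piecewise
`C²`, with finitely many sign changes of curvature and belonging to the class `K_π`,
every subarc has total curvature strictly greater than `−π`. -/
theorem statement10 (c : PC2ClosedCurve) (hpos : c.PositivelyOriented)
    (hsign : c.FiniteSignChanges) (hKpi : c.KPi) :
    ∀ a b : ℝ, a ≤ b → b - a ≤ c.L → -π < ∫ s in a..b, c.k s := by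
  intro a b hab hlen
  obtain ⟨m, v, h0, hm, hmon, hsg⟩ := partExistsAux c hsign hab hlen
  exact coreAux c hsign hKpi m a b v h0 hm hmon hsg hlen
end
end

section
/- The inequality A·E² ≥ π³ fails for non-simply-connected domains: for every ε > 0 there exist radii 0 < r < R such that the annulus bounded by two concentric circles of radii r and R satisfies Area · Energy² < ε, where Area = π(R² − r²) is the area of the annulus and Energy = π/r + π/R is the total elastic energy of its two boundary circles (each circle of radius ρ having elastic energy (1/2)·(2πρ)·(1/ρ²) = π/ρ). In particular the infimum of Area · Energy² over all annuli is 0 < π³. -/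
open MeasureTheory Set Real Filter
open scoped RealInnerProductSpace Topology

noncomputable section

/-- the inequality `A·E² ≥ π³` fails for annuli: the product
`Area · Energy² = π(R² − r²)·(π/r + π/R)²` can be made arbitrarily small, so its
infimum over all annuli is `0 < π³`. -/
theorem statement14 :
    (∀ ε > (0:ℝ), ∃ r R : ℝ, 0 < r ∧ r < R ∧
      π * (R ^ 2 - r ^ 2) * (π / r + π / R) ^ 2 < ε) ∧
    sInf {x : ℝ | ∃ r R : ℝ, 0 < r ∧ r < R ∧
      x = π * (R ^ 2 - r ^ 2) * (π / r + π / R) ^ 2} = 0 ∧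
    (0:ℝ) < π ^ 3 := by
  have hπ := Real.pi_pos
  have key : ∀ ε > (0:ℝ), ∃ r R : ℝ, 0 < r ∧ r < R ∧
      π * (R ^ 2 - r ^ 2) * (π / r + π / R) ^ 2 < ε := by
    intro ε hε
    set δ := min 1 (ε / (13 * π ^ 3)) with hδdef
    have hδpos : 0 < δ := lt_min one_pos (by positivity)
    have hδ1 : δ ≤ 1 := min_le_left _ _
    refine ⟨1, 1 + δ, one_pos, by linarith, ?_⟩
    have hR : (1:ℝ) < 1 + δ := by linarith
    have h1 : π / (1 + δ) ≤ π := by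
      rw [div_le_iff₀ (by linarith)]; nlinarith
    have harea : (1 + δ) ^ 2 - 1 ^ 2 ≤ 3 * δ := by nlinarith
    have hen : (π / 1 + π / (1 + δ)) ^ 2 ≤ (2 * π) ^ 2 := by
      have h2 : π / 1 + π / (1 + δ) ≤ 2 * π := by rw [div_one]; linarith
      have hpos : 0 ≤ π / 1 + π / (1 + δ) := by positivity
      nlinarith
    have hprod : π * ((1 + δ) ^ 2 - 1 ^ 2) * (π / 1 + π / (1 + δ)) ^ 2
        ≤ π * (3 * δ) * (2 * π) ^ 2 := by
      apply mul_le_mul _ hen (by positivity) (by positivity)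
      nlinarith
    have hδε : δ ≤ ε / (13 * π ^ 3) := min_le_right _ _
    have heq : π * (3 * δ) * (2 * π) ^ 2 = 12 * π ^ 3 * δ := by ring
    calc π * ((1 + δ) ^ 2 - 1 ^ 2) * (π / 1 + π / (1 + δ)) ^ 2
        ≤ 12 * π ^ 3 * δ := by linarith
      _ ≤ 12 * π ^ 3 * (ε / (13 * π ^ 3)) := by
          have : (0:ℝ) < 12 * π ^ 3 := by positivity
          nlinarith
      _ = (12 / 13) * ε := by field_simp
      _ < ε := by linarith
  have hbdd : ∀ x ∈ {x : ℝ | ∃ r R : ℝ, 0 < r ∧ r < R ∧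
      x = π * (R ^ 2 - r ^ 2) * (π / r + π / R) ^ 2}, 0 ≤ x := by
    rintro x ⟨r, R, hr, hrR, rfl⟩
    have h1 : 0 ≤ R ^ 2 - r ^ 2 := by nlinarith
    positivity
  refine ⟨key, ?_, by positivity⟩
  apply le_antisymm
  · by_contra h
    push_neg at h
    obtain ⟨r, R, hr, hrR, hlt⟩ := key _ h
    have hle := csInf_le ⟨0, hbdd⟩ (show _ ∈ {x : ℝ | ∃ r R : ℝ, 0 < r ∧ r < R ∧
      x = π * (R ^ 2 - r ^ 2) * (π / r + π / R) ^ 2} from ⟨r, R, hr, hrR, rfl⟩)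
    linarith
  · apply le_csInf
    · obtain ⟨r, R, h1, h2, _⟩ := key 1 one_pos
      exact ⟨_, r, R, h1, h2, rfl⟩
    · exact hbdd
end
end
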